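/- Let F(Λ) be the free group on Λ and w = w_1⋯w_n a word over Λ ∪ Λ^{-1}. Suppose i < j < k and: w_i = w_j^{-1} with w_{i+1}⋯w_{j−1} trivial in F(Λ), and w_i = w_k^{-1} with w_{i+1}⋯w_{k−1} trivial in F(Λ). Then w_j = w_k and w_{j+1}⋯w_k is trivial in F(Λ). -/

import Mathlib

lemma mk_single_inj {Λ : Type*} {x y : Λ × Bool}
    (h : FreeGroup.mk [x] = FreeGroup.mk [y]) : x = y := by
  classical
  have := congrArg FreeGroup.toWord h
  rw [FreeGroup.toWord_mk, FreeGroup.toWord_mk, FreeGroup.reduce_singleton,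
    FreeGroup.reduce_singleton] at this
  exact List.singleton_injective this

/-- If the letter at position `i` can cancel both with position `j` and with position
`k` (i.e. `w i = (w j)⁻¹` with `w_{i+1}⋯w_{j-1}` trivial, and `w i = (w k)⁻¹` with
`w_{i+1}⋯w_{k-1}` trivial, where `i < j < k`), then `w j = w k` and `w_{j+1}⋯w_k`
is trivial in the free group. -/
theorem stmt7 (Λ : Type*) (w : ℕ → Λ × Bool) (i j k : ℕ) (hij : i < j) (hjk : j < k)
    (h1 : FreeGroup.mk [w i] = (FreeGroup.mk [w j])⁻¹)
    (h2 : FreeGroup.mk ((List.range' (i + 1) (j - i - 1)).map w) = 1)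
    (h3 : FreeGroup.mk [w i] = (FreeGroup.mk [w k])⁻¹)
    (h4 : FreeGroup.mk ((List.range' (i + 1) (k - i - 1)).map w) = 1) :
    w j = w k ∧ FreeGroup.mk ((List.range' (j + 1) (k - j)).map w) = 1 := by
  have hjkeq : w j = w k := mk_single_inj (inv_injective (h1.symm.trans h3))
  refine ⟨hjkeq, ?_⟩
  have hsplit : List.range' (i + 1) (k - i - 1)
      = List.range' (i + 1) (j - i - 1) ++ [j] ++ List.range' (j + 1) (k - j - 1) := by
    have A := List.range'_append_1 (s := i+1) (m := j-i-1) (n := k-j)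
    have B := List.range'_append_1 (s := j) (m := 1) (n := k-j-1)
    rw [show i+1+(j-i-1) = j from by omega,
        show (j-i-1) + (k-j) = k-i-1 from by omega] at A
    rw [show 1+(k-j-1) = k-j from by omega] at B
    rw [← A, ← B, show List.range' j 1 = [j] from rfl, List.append_assoc]
  rw [hsplit, List.map_append, List.map_append, ← FreeGroup.mul_mk, ← FreeGroup.mul_mk,
    h2, one_mul, List.map_singleton] at h4
  have hwj : FreeGroup.mk ((List.range' (j + 1) (k - j - 1)).map w) = (FreeGroup.mk [w j])⁻¹ := by
    exact eq_inv_of_mul_eq_one_right h4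
  have hsplit2 : List.range' (j + 1) (k - j)
      = List.range' (j + 1) (k - j - 1) ++ [k] := by
    have C := List.range'_append_1 (s := j+1) (m := k-j-1) (n := 1)
    rw [show j+1+(k-j-1) = k from by omega,
        show k-j-1+1 = k-j from by omega] at C
    rw [← C, show List.range' k 1 = [k] from rfl]
  rw [hsplit2, List.map_append, ← FreeGroup.mul_mk, hwj, hjkeq]
  exact inv_mul_cancel _
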